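/- Let γ > 0 and define u : ℂ → ℝ by u(z) = Im(z^γ), where z^γ denotes the principal branch of the complex power (Complex.cpow). Then u is differentiable at every point of the slit plane ℂ \ (−∞, 0], with ‖fderiv ℝ u z‖ = γ · |z|^{γ−1} for every z in the slit plane, and for every h > 0 the Dirichlet integral satisfies ∫_{B(0,h)} ‖fderiv ℝ u z‖² dz = π γ h^{2γ}, where B(0,h) ⊂ ℂ ≅ ℝ² is the open disk of radius h with two-dimensional Lebesgue measure. -/

import Mathlib

open MeasureTheory

open ContinuousLinearMap in
private lemma norm_im_comp_mul' (d : ℂ) :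
    ‖(Complex.imCLM.comp (((1 : ℂ →L[ℂ] ℂ).smulRight d).restrictScalars ℝ))‖ = ‖d‖ := by
  apply le_antisymm
  · refine opNorm_le_bound _ (norm_nonneg d) fun w => ?_
    simp only [coe_comp', Function.comp_apply, coe_restrictScalars', smulRight_apply, one_apply,
      smul_eq_mul, Complex.imCLM_apply]
    calc |(w * d).im| ≤ ‖w * d‖ := Complex.abs_im_le_norm _
      _ = ‖d‖ * ‖w‖ := by rw [norm_mul]; exact mul_comm _ _
  · rcases eq_or_ne d 0 with rfl | hd
    · simp
    · have habs : ‖d‖ ≠ 0 := norm_ne_zero_iff.mpr hd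
      have hw : ‖Complex.I * (starRingEnd ℂ) d / (‖d‖ : ℂ)‖ = 1 := by
        simp only [norm_div, norm_mul, Complex.norm_conj, Complex.norm_I,
          Complex.norm_real, one_mul, norm_norm]
        exact div_self habs
      have hle := le_opNorm (Complex.imCLM.comp (((1 : ℂ →L[ℂ] ℂ).smulRight d).restrictScalars ℝ))
        (Complex.I * (starRingEnd ℂ) d / (‖d‖ : ℂ))
      rw [hw, mul_one] at hle
      refine le_trans ?_ hle
      have hvd : Complex.I * (starRingEnd ℂ) d / (‖d‖ : ℂ) * d = Complex.I * ((‖d‖ : ℝ) : ℂ) := by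
        rw [div_mul_eq_mul_div, mul_assoc, mul_comm ((starRingEnd ℂ) d) d, Complex.mul_conj']
        rw [sq, mul_div_assoc, mul_div_assoc, div_self (by simpa using habs), mul_one]
      simp only [coe_comp', Function.comp_apply, coe_restrictScalars', smulRight_apply, one_apply,
        smul_eq_mul, Complex.imCLM_apply, hvd]
      simp [abs_of_nonneg (norm_nonneg d)]
      have hn2 : ‖d‖ ^ 2 = d.re * d.re + d.im * d.im := by rw [Complex.sq_norm, Complex.normSq_apply]
      rw [show d.im / ‖d‖ * d.im + d.re / ‖d‖ * d.re = ‖d‖ by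
        rw [div_mul_eq_mul_div, div_mul_eq_mul_div, ← add_div, div_eq_iff habs]
        linear_combination (-1 : ℝ) * hn2]
      exact le_abs_self _

private lemma slitPlane_compl_null' : volume {z : ℂ | z ∉ Complex.slitPlane} = 0 := by
  have hsub : {z : ℂ | z ∉ Complex.slitPlane}
      ⊆ (LinearMap.range (Complex.ofRealCLM : ℝ →ₗ[ℝ] ℂ) : Set ℂ) := by
    intro z hz
    simp only [Set.mem_setOf_eq, Complex.mem_slitPlane_iff, not_or, not_lt, not_ne_iff] at hz
    exact ⟨z.re, by simp [Complex.ext_iff, hz.2]⟩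
  refine measure_mono_null hsub (Measure.addHaar_submodule _ _ ?_)
  intro htop
  have : Complex.I ∈ LinearMap.range (Complex.ofRealCLM : ℝ →ₗ[ℝ] ℂ) := htop ▸ Submodule.mem_top
  obtain ⟨x, hx⟩ := this
  have := congrArg Complex.im hx
  simp at this

/-- The model corner singularity `u(z) = Im(z^γ) = r^γ sin(γθ)`: it is real
differentiable on the slit plane with `‖Du(z)‖ = γ |z|^{γ-1}`, and its Dirichlet
integral over the disk of radius `h` equals `π γ h^{2γ}`. -/
theorem stmt_10 (γ : ℝ) (hγ : 0 < γ) (u : ℂ → ℝ)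
    (hu : ∀ z : ℂ, u z = (z ^ (γ : ℂ)).im) :
    (∀ z ∈ Complex.slitPlane, DifferentiableAt ℝ u z) ∧
    (∀ z ∈ Complex.slitPlane, ‖fderiv ℝ u z‖ = γ * ‖z‖ ^ (γ - 1)) ∧
    ∀ h : ℝ, 0 < h →
      (∫ z in Metric.ball (0 : ℂ) h, ‖fderiv ℝ u z‖ ^ 2) =
        Real.pi * γ * h ^ (2 * γ) := by
  have key : ∀ z ∈ Complex.slitPlane, HasFDerivAt u (Complex.imCLM.comp
      (((1 : ℂ →L[ℂ] ℂ).smulRight ((γ : ℂ) * z ^ ((γ : ℂ) - 1))).restrictScalars ℝ)) z := by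
    intro z hz
    rw [funext hu]
    exact Complex.imCLM.hasFDerivAt.comp z
      ((Complex.hasStrictDerivAt_cpow_const (c := (γ : ℂ)) hz).hasDerivAt.hasFDerivAt.restrictScalars ℝ)
  have hnorm : ∀ z ∈ Complex.slitPlane, ‖fderiv ℝ u z‖ = γ * ‖z‖ ^ (γ - 1) := by
    intro z hz
    rw [(key z hz).fderiv, norm_im_comp_mul']
    have hc : ((γ : ℂ) - 1) = ((γ - 1 : ℝ) : ℂ) := by push_cast; ring
    rw [hc, norm_mul, Complex.norm_real, Real.norm_eq_abs,
      abs_of_pos hγ, Complex.norm_cpow_real]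
  refine ⟨fun z hz => (key z hz).differentiableAt, hnorm, fun h hh => ?_⟩
  have hST : ∀ᵐ z : ℂ, z ∈ Complex.slitPlane := by
    rw [ae_iff]; exact slitPlane_compl_null'
  have h1 : (∫ z in Metric.ball (0 : ℂ) h, ‖fderiv ℝ u z‖ ^ 2)
      = ∫ z in Metric.ball (0 : ℂ) h,
          Set.indicator (Set.Iio h) (fun r => γ ^ 2 * r ^ (2 * γ - 2)) ‖z‖ := by
    refine setIntegral_congr_ae measurableSet_ball ?_
    filter_upwards [hST] with z hz hzb
    rw [hnorm z hz, Set.indicator_of_mem (by simpa [mem_ball_zero_iff] using hzb)]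
    rw [mul_pow, ← Real.rpow_natCast (‖z‖ ^ (γ - 1)) 2,
      ← Real.rpow_mul (norm_nonneg z)]
    congr 1
    push_cast
    ring
  rw [h1, ← integral_indicator measurableSet_ball]
  have h2 : ∀ z : ℂ, Set.indicator (Metric.ball (0 : ℂ) h)
        (fun z : ℂ => Set.indicator (Set.Iio h) (fun r => γ ^ 2 * r ^ (2 * γ - 2)) ‖z‖) z
      = Set.indicator (Set.Iio h) (fun r => γ ^ 2 * r ^ (2 * γ - 2)) ‖z‖ := by
    intro z
    by_cases hz : z ∈ Metric.ball (0 : ℂ) h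
    · rw [Set.indicator_of_mem hz]
    · rw [Set.indicator_of_notMem hz,
        Set.indicator_of_notMem (by simpa [mem_ball_zero_iff] using hz)]
  simp_rw [h2]
  rw [integral_fun_norm_addHaar volume (fun r => Set.indicator (Set.Iio h)
      (fun r => γ ^ 2 * r ^ (2 * γ - 2)) r)]
  have hdim : Module.finrank ℝ ℂ = 2 := Complex.finrank_real_complex
  rw [hdim]
  have hvol : volume.real (Metric.ball (0 : ℂ) 1) = Real.pi := by
    rw [measureReal_def, Complex.volume_ball]
    simp [ENNReal.toReal_mul, Real.pi_nonneg]
  rw [hvol]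
  have hI : (∫ y in Set.Ioi (0 : ℝ), y ^ (2 - 1) •
        Set.indicator (Set.Iio h) (fun r => γ ^ 2 * r ^ (2 * γ - 2)) y)
      = γ ^ 2 * (h ^ (2 * γ) / (2 * γ)) := by
    have e1 : (∫ y in Set.Ioi (0 : ℝ), y ^ (2 - 1) •
          Set.indicator (Set.Iio h) (fun r => γ ^ 2 * r ^ (2 * γ - 2)) y)
        = ∫ y in Set.Ioi (0 : ℝ),
            Set.indicator (Set.Iio h) (fun r => γ ^ 2 * r ^ (2 * γ - 1)) y := by
      refine setIntegral_congr_fun measurableSet_Ioi fun y hy => ?_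
      simp only [pow_one, smul_eq_mul]
      by_cases hyh : y ∈ Set.Iio h
      · rw [Set.indicator_of_mem hyh, Set.indicator_of_mem hyh,
          show 2 * γ - 1 = 1 + (2 * γ - 2) by ring,
          Real.rpow_add (Set.mem_Ioi.mp hy), Real.rpow_one]
        ring
      · rw [Set.indicator_of_notMem hyh, Set.indicator_of_notMem hyh, mul_zero]
    rw [e1, setIntegral_indicator measurableSet_Iio, Set.Ioi_inter_Iio,
      ← integral_Ioc_eq_integral_Ioo, ← intervalIntegral.integral_of_le hh.le,
      intervalIntegral.integral_const_mul, integral_rpow (Or.inl (by linarith))]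
    rw [show 2 * γ - 1 + 1 = 2 * γ by ring, Real.zero_rpow (by positivity)]
    ring
  rw [hI]
  simp only [nsmul_eq_mul, smul_eq_mul, Nat.cast_ofNat]
  field_simp
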